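/- Let R be a commutative Noetherian ring and r_1, r_2 ∈ R. Then (y_1 − r_1, y_2 − r_2) is a regular sequence in the formal power series ring R⟦y_1, y_2⟧: y_1 − r_1 is a non-zero-divisor, and y_2 − r_2 is a non-zero-divisor modulo the ideal (y_1 − r_1). -/

import Mathlib

/-- Core Fields-type lemma via Krull intersection / Nakayama. -/
theorem core_lemma {A : Type*} [CommRing A] [IsNoetherianRing A] (r : A) (g : ℕ → A)
    (h0 : r * g 0 = 0) (hs : ∀ n, g n = r * g (n + 1)) : ∀ n, g n = 0 := by
  have hpow : ∀ n k, g n = r ^ k * g (n + k) := by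
    intro n k
    induction k with
    | zero => simp
    | succ k ih =>
      rw [ih, hs (n + k), ← mul_assoc, ← pow_succ, ← add_assoc]
  have hN : ∀ n, ∃ b : Ideal.span {r}, (b : A) • g n = g n := by
    intro n
    rw [← Ideal.mem_iInf_smul_pow_eq_bot_iff]
    rw [Submodule.mem_iInf]
    intro k
    have hr : r ^ k ∈ (Ideal.span {r}) ^ k :=
      Ideal.pow_mem_pow (Ideal.mem_span_singleton_self r) k
    rw [hpow n k]
    exact Submodule.smul_mem_smul hr Submodule.mem_top
  intro n
  induction n with
  | zero =>
    obtain ⟨⟨b, hb⟩, hb'⟩ := hN 0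
    obtain ⟨c, rfl⟩ := Ideal.mem_span_singleton'.mp hb
    calc g 0 = (c * r) * g 0 := hb'.symm
    _ = c * (r * g 0) := by ring
    _ = 0 := by rw [h0, mul_zero]
  | succ n ih =>
    obtain ⟨⟨b, hb⟩, hb'⟩ := hN (n + 1)
    obtain ⟨c, rfl⟩ := Ideal.mem_span_singleton'.mp hb
    calc g (n + 1) = (c * r) * g (n + 1) := hb'.symm
    _ = c * (r * g (n + 1)) := by ring
    _ = c * g n := by rw [← hs]
    _ = 0 := by rw [ih, mul_zero]

section HilbertBasis
open PowerSeries


variable {R : Type*} [CommRing R]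

/-- The `n`-th leading coefficient ideal of an ideal of power series. -/
noncomputable def ldIdeal (I : Ideal (PowerSeries R)) (n : ℕ) : Ideal R :=
  Submodule.map (PowerSeries.coeff n)
    ((I.restrictScalars R) ⊓ (⨅ j < n, LinearMap.ker (PowerSeries.coeff j)))

theorem mem_ldIdeal {I : Ideal (PowerSeries R)} {n : ℕ} {a : R} :
    a ∈ ldIdeal I n ↔ ∃ f, f ∈ I ∧ (∀ j < n, coeff j f = 0) ∧ coeff n f = a := by
  simp only [ldIdeal, Submodule.mem_map, Submodule.mem_inf, Submodule.mem_iInf,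
    LinearMap.mem_ker, Submodule.restrictScalars_mem]
  constructor
  · rintro ⟨f, ⟨h1, h2⟩, h3⟩; exact ⟨f, h1, h2, h3⟩
  · rintro ⟨f, h1, h2, h3⟩; exact ⟨f, ⟨h1, h2⟩, h3⟩

theorem ldIdeal_mono (I : Ideal (PowerSeries R)) : Monotone (ldIdeal I) := by
  apply monotone_nat_of_le_succ
  intro n a ha
  obtain ⟨f, hfI, hlow, hcoe⟩ := mem_ldIdeal.mp ha
  refine mem_ldIdeal.mpr ⟨X * f, I.mul_mem_left _ hfI, ?_, ?_⟩
  · intro j hj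
    cases j with
    | zero => exact coeff_zero_X_mul f
    | succ k => rw [coeff_succ_X_mul]; exact hlow k (by omega)
  · rw [coeff_succ_X_mul, hcoe]

theorem PowerSeries.isNoetherianRing' [IsNoetherianRing R] :
    IsNoetherianRing (PowerSeries R) := by
  classical
  rw [isNoetherianRing_iff_ideal_fg]
  intro I
  set L : ℕ → Ideal R := ldIdeal I with hL
  -- stabilization of the chain
  obtain ⟨N, hN⟩ := monotone_stabilizes_iff_noetherian.mpr inferInstance
    ⟨L, ldIdeal_mono I⟩
  -- generators of each leading ideal
  have hfg : ∀ n, ∃ s : Finset R, Submodule.span R (↑s : Set R) = L n := fun n =>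
    (IsNoetherian.noetherian (L n))
  choose s hs using hfg
  -- witnesses
  have exw : ∀ n a, a ∈ L n →
      ∃ f, f ∈ I ∧ (∀ j < n, coeff j f = 0) ∧ coeff n f = a := fun n a ha =>
    mem_ldIdeal.mp ha
  choose! w hwI hwlow hwcoeff using exw
  have hmemL : ∀ n, ∀ b ∈ s n, b ∈ L n := fun n b hb => by
    rw [← hs n]; exact Submodule.subset_span hb
  set T : Finset (PowerSeries R) :=
    (Finset.range (N + 1)).biUnion (fun n => (s n).image (w n)) with hT
  have hwT : ∀ n, n ≤ N → ∀ b ∈ s n, w n b ∈ Ideal.span (↑T : Set (PowerSeries R)) := by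
    intro n hn b hb
    apply Ideal.subset_span
    simp only [hT, Finset.coe_biUnion, Finset.mem_coe, Finset.mem_range]
    exact Set.mem_iUnion₂.mpr ⟨n, by omega, by
      simpa using Finset.mem_image_of_mem (w n) hb⟩
  refine ⟨T, le_antisymm ?_ ?_⟩
  · rw [Ideal.span_le]
    intro x hx
    simp only [hT, Finset.coe_biUnion, Set.mem_iUnion, Finset.mem_coe, Finset.mem_range,
      Finset.mem_image] at hx
    obtain ⟨n, hn, b, hb, rfl⟩ := hx
    exact hwI n b (hmemL n b hb)
  · intro f hf
    -- Step A : clear the first N+1 coefficients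
    have stepA : ∀ n, n ≤ N + 1 → ∃ g, g ∈ Ideal.span (↑T : Set (PowerSeries R)) ∧
        f - g ∈ I ∧ ∀ j < n, coeff j (f - g) = 0 := by
      intro n
      induction n with
      | zero => exact fun _ => ⟨0, Ideal.zero_mem _, by simpa using hf, by omega⟩
      | succ n ih =>
        intro hn
        obtain ⟨g, hgT, hgI, hglow⟩ := ih (by omega)
        have ha : coeff n (f - g) ∈ L n := mem_ldIdeal.mpr ⟨f - g, hgI, hglow, rfl⟩
        obtain ⟨c, -, hc⟩ := (Submodule.mem_span_finset (s := s n)).mp (by rw [hs n]; exact ha)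
        have hnN : n ≤ N := by omega
        refine ⟨g + ∑ b ∈ s n, C (c b) * w n b, ?_, ?_, ?_⟩
        · exact Ideal.add_mem _ hgT (Ideal.sum_mem _ fun b hb =>
            Ideal.mul_mem_left _ _ (hwT n hnN b hb))
        · have : f - (g + ∑ b ∈ s n, C (c b) * w n b)
              = (f - g) - ∑ b ∈ s n, C (c b) * w n b := by ring
          rw [this]
          exact Submodule.sub_mem _ hgI (Ideal.sum_mem _ fun b hb =>
            Ideal.mul_mem_left _ _ (hwI n b (hmemL n b hb)))
        · intro j hj
          have : f - (g + ∑ b ∈ s n, C (c b) * w n b)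
              = (f - g) - ∑ b ∈ s n, C (c b) * w n b := by ring
          rw [this, map_sub, map_sum]
          rcases Nat.lt_or_ge j n with hjn | hjn
          · rw [hglow j hjn]
            rw [Finset.sum_eq_zero, sub_zero]
            intro b hb
            rw [coeff_C_mul, hwlow n b (hmemL n b hb) j hjn, mul_zero]
          · have hj' : j = n := by omega
            subst hj'
            rw [sub_eq_zero]
            have hterm : ∀ b ∈ s j, coeff j (C (c b) * w j b) = c b • b := by
              intro b hb
              rw [coeff_C_mul, hwcoeff j b (hmemL j b hb), smul_eq_mul]
            rw [Finset.sum_congr rfl hterm, hc]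
    obtain ⟨g, hgT, hgI, hglow⟩ := stepA (N + 1) le_rfl
    set f₁ : PowerSeries R := f - g with hf₁
    -- Step B : divide `f₁` by the witnesses of level `N`
    have exc : ∀ a, a ∈ L N → ∃ c : R → R, ∑ b ∈ s N, c b • b = a := fun a ha =>
      (Submodule.mem_span_finset (s := s N)).mp (by rw [hs N]; exact ha) |>.imp fun _ h => h.2
    choose! sel hsel using exc
    set rem : ℕ → PowerSeries R := fun m => Nat.rec f₁
      (fun m p => p - ∑ b ∈ s N, C (sel (coeff (N + m) p) b) * (X ^ m * w N b)) m
      with hrem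
    have hrem0 : rem 0 = f₁ := rfl
    have hremS : ∀ m, rem (m + 1) =
        rem m - ∑ b ∈ s N, C (sel (coeff (N + m) (rem m)) b) * (X ^ m * w N b) := fun m => rfl
    have inv : ∀ m, rem m ∈ I ∧ ∀ j < N + m, coeff j (rem m) = 0 := by
      intro m
      induction m with
      | zero => exact ⟨hgI, fun j hj => hglow j (by omega)⟩
      | succ m ih =>
        obtain ⟨ihI, ihlow⟩ := ih
        have haL : coeff (N + m) (rem m) ∈ L N := by
          have h1 : coeff (N + m) (rem m) ∈ L (N + m) :=
            mem_ldIdeal.mpr ⟨rem m, ihI, ihlow, rfl⟩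
          have h2 : L N = L (N + m) := hN (N + m) (by omega)
          rwa [← h2] at h1
        have hselm := hsel _ haL
        constructor
        · rw [hremS]
          exact Submodule.sub_mem _ ihI (Ideal.sum_mem _ fun b hb =>
            Ideal.mul_mem_left _ _ (Ideal.mul_mem_left _ _ (hwI N b (hmemL N b hb))))
        · intro j hj
          rw [hremS, map_sub, map_sum]
          rcases Nat.lt_or_ge j (N + m) with hjm | hjm
          · rw [ihlow j hjm, Finset.sum_eq_zero, sub_zero]
            intro b hb
            rw [coeff_C_mul, coeff_X_pow_mul']
            split_ifs with h
            · rw [hwlow N b (hmemL N b hb) (j - m) (by omega), mul_zero]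
            · rw [mul_zero]
          · have hj' : j = N + m := by omega
            subst hj'
            rw [sub_eq_zero]
            have hterm : ∀ b ∈ s N,
                coeff (N + m) (C (sel (coeff (N + m) (rem m)) b) * (X ^ m * w N b))
                  = sel (coeff (N + m) (rem m)) b • b := by
              intro b hb
              rw [coeff_C_mul, coeff_X_pow_mul', if_pos (by omega),
                show N + m - m = N by omega, hwcoeff N b (hmemL N b hb), smul_eq_mul]
            rw [Finset.sum_congr rfl hterm, hselm]
    -- the quotient series
    set q : R → PowerSeries R := fun b =>
      PowerSeries.mk (fun m => sel (coeff (N + m) (rem m)) b) with hq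
    have htel : ∀ m,
        f₁ - ∑ b ∈ s N, (∑ j ∈ Finset.range m, C (coeff j (q b)) * X ^ j) * w N b
          = rem m := by
      intro m
      induction m with
      | zero => simp [hrem0]
      | succ m ih =>
        have hcq : ∀ b, coeff m (q b) = sel (coeff (N + m) (rem m)) b := by
          intro b; rw [hq]; exact coeff_mk m _
        rw [hremS]
        simp only [Finset.sum_range_succ, add_mul, Finset.sum_add_distrib, hcq, mul_assoc,
          ← sub_sub]
        rw [ih]
    -- conclude : `f₁` equals the combination of the `w N b`
    have hfinal : f₁ = ∑ b ∈ s N, q b * w N b := by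
      ext k
      have h1 := htel (k + 1)
      have h2 : coeff k (rem (k + 1)) = 0 := (inv (k + 1)).2 k (by omega)
      have h3 : ∀ b, coeff k ((∑ j ∈ Finset.range (k + 1), C (coeff j (q b)) * X ^ j)
          * w N b) = coeff k (q b * w N b) := by
        intro b
        rw [coeff_mul, coeff_mul]
        apply Finset.sum_congr rfl
        rintro ⟨i, j⟩ hij
        rw [Finset.HasAntidiagonal.mem_antidiagonal] at hij
        congr 1
        rw [map_sum]
        rw [Finset.sum_eq_single i]
        · rw [coeff_C_mul_X_pow, if_pos rfl]
        · intro l hl hli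
          rw [coeff_C_mul_X_pow, if_neg (fun h => hli h.symm)]
        · intro hi
          exact absurd (Finset.mem_range.mpr (by omega)) hi
      have h4 := congrArg (coeff k) h1
      rw [map_sub, map_sum] at h4
      rw [h2, sub_eq_zero] at h4
      rw [h4, map_sum]
      exact Finset.sum_congr rfl fun b _ => h3 b
    have : f = g + ∑ b ∈ s N, q b * w N b := by rw [← hfinal, hf₁]; ring
    rw [this]
    exact Ideal.add_mem _ hgT (Ideal.sum_mem _ fun b hb =>
      Ideal.mul_mem_left _ _ (hwT N le_rfl b hb))

end HilbertBasis


open MvPowerSeries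

namespace Stmt11Aux

/-- The multi-index `(k, m)` in `Fin 2 →₀ ℕ`. -/
noncomputable def d2 (k m : ℕ) : Fin 2 →₀ ℕ :=
  Finsupp.single 0 k + Finsupp.single 1 m

theorem d2_apply0 (k m : ℕ) : d2 k m 0 = k := by
  simp [d2, Finsupp.single_apply]

theorem d2_apply1 (k m : ℕ) : d2 k m 1 = m := by
  simp [d2, Finsupp.single_apply]

theorem eq_d2 (d : Fin 2 →₀ ℕ) : d = d2 (d 0) (d 1) := by
  ext i
  fin_cases i
  · show d 0 = d2 (d 0) (d 1) 0
    rw [d2_apply0]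
  · show d 1 = d2 (d 0) (d 1) 1
    rw [d2_apply1]

variable {R : Type*} [CommRing R]

theorem coeff_X0_mul (g : MvPowerSeries (Fin 2) R) (k m : ℕ) :
    coeff (d2 (k + 1) m) (X 0 * g) = coeff (d2 k m) g := by
  have h : d2 (k + 1) m = Finsupp.single (0 : Fin 2) 1 + d2 k m := by
    ext i
    fin_cases i <;> simp [d2, Finsupp.single_apply] <;> omega
  rw [h, X_def, coeff_add_monomial_mul, one_mul]

theorem coeff_X0_mul_zero (g : MvPowerSeries (Fin 2) R) (m : ℕ) :
    coeff (d2 0 m) (X 0 * g) = 0 := by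
  rw [X_def, coeff_monomial_mul, if_neg]
  intro hle
  have := hle 0
  rw [d2_apply0] at this
  simp [Finsupp.single_apply] at this

theorem coeff_X1_mul (g : MvPowerSeries (Fin 2) R) (k m : ℕ) :
    coeff (d2 k (m + 1)) (X 1 * g) = coeff (d2 k m) g := by
  have h : d2 k (m + 1) = Finsupp.single (1 : Fin 2) 1 + d2 k m := by
    ext i
    fin_cases i <;> simp [d2, Finsupp.single_apply] <;> omega
  rw [h, X_def, coeff_add_monomial_mul, one_mul]

theorem coeff_X1_mul_zero (g : MvPowerSeries (Fin 2) R) (k : ℕ) :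
    coeff (d2 k 0) (X 1 * g) = 0 := by
  rw [X_def, coeff_monomial_mul, if_neg]
  intro hle
  have := hle 1
  rw [d2_apply1] at this
  simp [Finsupp.single_apply] at this


theorem part1 [IsNoetherianRing R] (r₁ : R) (g : MvPowerSeries (Fin 2) R)
    (hg : (X (0 : Fin 2) - C r₁) * g = 0) : g = 0 := by
  have key : ∀ d, coeff d (X (0 : Fin 2) * g) = r₁ * coeff d g := by
    intro d
    have h1 : X (0 : Fin 2) * g - C r₁ * g = 0 := by
      rw [← sub_mul]; exact hg
    have h2 := congrArg (coeff d) h1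
    rw [map_sub, map_zero, sub_eq_zero, coeff_C_mul] at h2
    exact h2
  have main : ∀ m n, coeff (d2 n m) g = 0 := by
    intro m
    exact core_lemma r₁ (fun n => coeff (d2 n m) g)
      (by rw [← key, coeff_X0_mul_zero])
      (fun n => by rw [← key, coeff_X0_mul])
  ext d
  rw [map_zero, eq_d2 d]
  exact main (d 1) (d 0)


/-- The `m`-th slice (in the second variable) of a two-variable power series. -/
noncomputable def sl (m : ℕ) (f : MvPowerSeries (Fin 2) R) : PowerSeries R :=
  PowerSeries.mk fun k => coeff (d2 k m) f

theorem coeff_sl (m k : ℕ) (f : MvPowerSeries (Fin 2) R) :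
    PowerSeries.coeff k (sl m f) = coeff (d2 k m) f :=
  PowerSeries.coeff_mk k _

theorem sl_u_mul (r₁ : R) (m : ℕ) (f : MvPowerSeries (Fin 2) R) :
    sl m ((X (0 : Fin 2) - C r₁) * f)
      = (PowerSeries.X - PowerSeries.C r₁) * sl m f := by
  ext k
  rw [coeff_sl, sub_mul, sub_mul, map_sub, map_sub, coeff_C_mul, PowerSeries.coeff_C_mul,
    coeff_sl]
  cases k with
  | zero => rw [coeff_X0_mul_zero, PowerSeries.coeff_zero_X_mul]
  | succ j => rw [coeff_X0_mul, PowerSeries.coeff_succ_X_mul, coeff_sl]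

theorem sl_v_mul_zero (r₂ : R) (f : MvPowerSeries (Fin 2) R) :
    sl 0 ((X (1 : Fin 2) - C r₂) * f)
      = -(PowerSeries.C r₂ * sl 0 f) := by
  ext k
  rw [coeff_sl, sub_mul, map_sub, map_neg, PowerSeries.coeff_C_mul, coeff_C_mul, coeff_sl,
    coeff_X1_mul_zero, zero_sub]

theorem sl_v_mul (r₂ : R) (m : ℕ) (f : MvPowerSeries (Fin 2) R) :
    sl (m + 1) ((X (1 : Fin 2) - C r₂) * f)
      = sl m f - PowerSeries.C r₂ * sl (m + 1) f := by
  ext k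
  rw [coeff_sl, sub_mul, map_sub, map_sub, PowerSeries.coeff_C_mul, coeff_C_mul, coeff_sl,
    coeff_sl, coeff_X1_mul]

theorem part2 [IsNoetherianRing R] (r₁ r₂ : R) (g h : MvPowerSeries (Fin 2) R)
    (hgh : (X (1 : Fin 2) - C r₂) * g = (X (0 : Fin 2) - C r₁) * h) :
    g ∈ Ideal.span {X (0 : Fin 2) - C r₁} := by
  classical
  haveI : IsNoetherianRing (PowerSeries R) := PowerSeries.isNoetherianRing'
  set u : PowerSeries R := PowerSeries.X - PowerSeries.C r₁ with hu
  set π : PowerSeries R →+* PowerSeries R ⧸ Ideal.span {u} :=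
    Ideal.Quotient.mk (Ideal.span {u}) with hπ
  have hπu : π u = 0 := Ideal.Quotient.eq_zero_iff_mem.mpr (Ideal.subset_span rfl)
  have hseq0 : π (PowerSeries.C r₂) * π (sl 0 g) = 0 := by
    have h1 := congrArg (sl 0) hgh
    rw [sl_v_mul_zero, sl_u_mul, ← hu] at h1
    have h2 := congrArg π h1
    rw [map_neg, map_mul, map_mul, hπu, zero_mul, neg_eq_zero] at h2
    exact h2
  have hseqS : ∀ m, π (sl m g) = π (PowerSeries.C r₂) * π (sl (m + 1) g) := by
    intro m
    have h1 := congrArg (sl (m + 1)) hgh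
    rw [sl_v_mul, sl_u_mul, ← hu] at h1
    have h2 := congrArg π h1
    rw [map_sub, map_mul, map_mul, hπu, zero_mul, sub_eq_zero] at h2
    exact h2
  have hzero : ∀ m, π (sl m g) = 0 :=
    core_lemma (π (PowerSeries.C r₂)) (fun m => π (sl m g)) hseq0 hseqS
  have hmem : ∀ m, ∃ q, u * q = sl m g := by
    intro m
    obtain ⟨a, ha⟩ := Ideal.mem_span_singleton'.mp
      (Ideal.Quotient.eq_zero_iff_mem.mp (hzero m))
    exact ⟨a, by rw [mul_comm]; exact ha⟩
  choose q hq using hmem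
  set h' : MvPowerSeries (Fin 2) R := fun d => PowerSeries.coeff (d 0) (q (d 1)) with hh'
  have hch' : ∀ k m : ℕ, coeff (d2 k m) h' = PowerSeries.coeff k (q m) := by
    intro k m
    rw [coeff_apply, hh']
    show PowerSeries.coeff (d2 k m 0) (q (d2 k m 1)) = PowerSeries.coeff k (q m)
    rw [d2_apply0, d2_apply1]
  refine Ideal.mem_span_singleton'.mpr ⟨h', ?_⟩
  have main : ∀ k m : ℕ, coeff (d2 k m) ((X (0 : Fin 2) - C r₁) * h')
      = coeff (d2 k m) g := by
    intro k m
    have hg' : coeff (d2 k m) g = PowerSeries.coeff k (u * q m) := by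
      rw [hq m, coeff_sl]
    rw [hg', hu, sub_mul, sub_mul, map_sub, map_sub, PowerSeries.coeff_C_mul, coeff_C_mul,
      hch']
    cases k with
    | zero => rw [coeff_X0_mul_zero, PowerSeries.coeff_zero_X_mul]
    | succ j => rw [coeff_X0_mul, PowerSeries.coeff_succ_X_mul, hch']
  rw [mul_comm]
  ext d
  rw [eq_d2 d]
  exact main (d 0) (d 1)

end Stmt11Aux


/-- For a commutative Noetherian ring `R` and `r₁, r₂ ∈ R`, the sequence
`(y₁ − r₁, y₂ − r₂)` is regular in `R⟦y₁, y₂⟧`: `y₁ − r₁` is a non-zero-divisor, and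
`y₂ − r₂` is a non-zero-divisor modulo the ideal `(y₁ − r₁)`. -/
theorem stmt11 {R : Type*} [CommRing R] [IsNoetherianRing R] (r₁ r₂ : R) :
    (MvPowerSeries.X (0 : Fin 2) - MvPowerSeries.C (σ := Fin 2) (R := R) r₁) ∈
        nonZeroDivisors (MvPowerSeries (Fin 2) R) ∧
      Ideal.Quotient.mk
          (Ideal.span {MvPowerSeries.X (0 : Fin 2) - MvPowerSeries.C (σ := Fin 2) (R := R) r₁})
          (MvPowerSeries.X (1 : Fin 2) - MvPowerSeries.C (σ := Fin 2) (R := R) r₂) ∈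
        nonZeroDivisors
          (MvPowerSeries (Fin 2) R ⧸
            Ideal.span {MvPowerSeries.X (0 : Fin 2) - MvPowerSeries.C (σ := Fin 2) (R := R) r₁}) := by
  constructor
  · rw [mem_nonZeroDivisors_iff_right]
    intro x hx
    exact Stmt11Aux.part1 r₁ x (by rwa [mul_comm] at hx)
  · rw [mem_nonZeroDivisors_iff_right]
    intro x hx
    obtain ⟨g, rfl⟩ := Ideal.Quotient.mk_surjective x
    rw [← map_mul, Ideal.Quotient.eq_zero_iff_mem] at hx
    obtain ⟨h, hh⟩ := Ideal.mem_span_singleton'.mp hx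
    have hgh : (MvPowerSeries.X (1 : Fin 2) - MvPowerSeries.C (σ := Fin 2) (R := R) r₂) * g
        = (MvPowerSeries.X (0 : Fin 2) - MvPowerSeries.C (σ := Fin 2) (R := R) r₁) * h := by
      rw [mul_comm, ← hh, mul_comm]
    exact Ideal.Quotient.eq_zero_iff_mem.mpr (Stmt11Aux.part2 r₁ r₂ g h hgh)
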